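/- arXiv:1705.06881 — 3 statements merged into one kernel-verified Lean document; each statement's English description precedes it below -/
import Mathlib

section
/- Let L ∈ ℝ and κ > 0, and let b : ℝ → ℝ be continuously differentiable on (−∞, L] with b(y)² + b'(y) ≤ 2κ for all y ≤ L. Then b(y) ≤ √(2κ) for all y ≤ L. -/
open Real

/-- If `b` is continuously differentiable on `(−∞, L]` with `b² + b' ≤ 2κ` there,
then `b ≤ √(2κ)` on `(−∞, L]`. -/
theorem stmt_7 (L κ : ℝ) (hκ : 0 < κ) (b b' : ℝ → ℝ)
    (hderiv : ∀ y ∈ Set.Iic L, HasDerivWithinAt b (b' y) (Set.Iic L) y)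
    (hcont : ContinuousOn b' (Set.Iic L))
    (hbound : ∀ y ∈ Set.Iic L, b y ^ 2 + b' y ≤ 2 * κ) :
    ∀ y ∈ Set.Iic L, b y ≤ Real.sqrt (2 * κ) := by
  by_contra h
  push_neg at h
  obtain ⟨y₀, hy₀L, hy₀⟩ := h
  have hy₀L' : y₀ ≤ L := hy₀L
  set c := Real.sqrt (2 * κ) with hc
  have hc0 : 0 ≤ c := Real.sqrt_nonneg _
  have hc2 : c ^ 2 = 2 * κ := Real.sq_sqrt (by positivity)
  set M := b y₀ with hMdef
  have hMc : c < M := hy₀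
  have hM0 : 0 < M := lt_of_le_of_lt hc0 hMc
  have hM2 : 2 * κ < M ^ 2 := by nlinarith
  -- continuity of b on Iic L
  have hbc : ContinuousOn b (Set.Iic L) := fun y hy => (hderiv y hy).continuousWithinAt
  -- full derivative at interior points
  have hD : ∀ x ∈ Set.Iio L, HasDerivAt b (b' x) x := fun x hx =>
    (hderiv x (Set.mem_Iic.mpr (Set.mem_Iio.mp hx).le)).hasDerivAt (Iic_mem_nhds hx)
  have hderivEq : ∀ x ∈ Set.Iio L, deriv b x = b' x := fun x hx => (hD x hx).deriv
  -- Step A : b ≥ M on Iic y₀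
  have hA : ∀ y ≤ y₀, M ≤ b y := by
    intro y hy
    by_contra hlt
    push_neg at hlt
    have hyy₀ : y < y₀ := by
      rcases lt_or_eq_of_le hy with h | h
      · exact h
      · rw [h] at hlt; exact absurd hlt (lt_irrefl _)
    have hbm : max c (b y) < M := max_lt hMc hlt
    set v := (max c (b y) + M) / 2 with hv
    have hvc : c < v := by
      have := le_max_left c (b y); simp only [hv]; linarith
    have hvy : b y < v := by
      have := le_max_right c (b y); simp only [hv]; linarith
    have hvM : v < M := by simp only [hv]; linarith
    have hv0 : 0 < v := lt_of_le_of_lt hc0 hvc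
    have hv2 : 2 * κ < v ^ 2 := by nlinarith
    have hsub : Set.Icc y y₀ ⊆ Set.Iic L := fun z hz => le_trans hz.2 hy₀L'
    have hbcont : ContinuousOn b (Set.Icc y y₀) := hbc.mono hsub
    -- IVT: there is a point with b = v
    have hivt : v ∈ b '' Set.Icc y y₀ :=
      intermediate_value_Icc (le_of_lt hyy₀) hbcont ⟨le_of_lt hvy, le_of_lt hvM⟩
    set S := Set.Icc y y₀ ∩ b ⁻¹' {v} with hS
    have hSne : S.Nonempty := by
      obtain ⟨z, hz, hbz⟩ := hivt
      exact ⟨z, hz, by simp [hbz]⟩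
    have hSclosed : IsClosed S :=
      hbcont.preimage_isClosed_of_isClosed isClosed_Icc isClosed_singleton
    have hScomp : IsCompact S :=
      isCompact_Icc.of_isClosed_subset hSclosed Set.inter_subset_left
    set y₂ := sSup S with hy₂def
    have hy₂S : y₂ ∈ S := hScomp.sSup_mem hSne
    have hy₂v : b y₂ = v := hy₂S.2
    have hy₂mem : y₂ ∈ Set.Icc y y₀ := hy₂S.1
    have hy₂lt : y₂ < y₀ := by
      rcases lt_or_eq_of_le hy₂mem.2 with h | h
      · exact h
      · exfalso; rw [h] at hy₂v; rw [← hMdef] at hy₂v; linarith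
    -- on [y₂, y₀], b ≥ v
    have hge : ∀ z ∈ Set.Icc y₂ y₀, v ≤ b z := by
      intro z hz
      by_contra hbz
      push_neg at hbz
      have hzy₀ : z < y₀ := by
        rcases lt_or_eq_of_le hz.2 with h | h
        · exact h
        · exfalso; rw [h, ← hMdef] at hbz; linarith
      have hivt2 : v ∈ b '' Set.Icc z y₀ := by
        apply intermediate_value_Icc (le_of_lt hzy₀)
          (hbcont.mono (Set.Icc_subset_Icc (le_trans hy₂mem.1 hz.1) le_rfl))
        exact ⟨le_of_lt hbz, le_of_lt hvM⟩
      obtain ⟨w, hw, hbw⟩ := hivt2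
      have hwS : w ∈ S := ⟨⟨le_trans hy₂mem.1 (le_trans hz.1 hw.1), hw.2⟩, by simp [hbw]⟩
      have hwle : w ≤ y₂ := le_csSup hScomp.bddAbove hwS
      have : z = y₂ := le_antisymm (le_trans hw.1 hwle |>.trans le_rfl |> fun _ => le_trans hw.1 hwle) hz.1
      rw [this, hy₂v] at hbz; exact absurd hbz (lt_irrefl _)
    -- derivative bound on interior
    have hdle : ∀ x ∈ interior (Set.Icc y₂ y₀), deriv b x ≤ 2 * κ - v ^ 2 := by
      intro x hx
      rw [interior_Icc] at hx
      have hxL : x < L := lt_of_lt_of_le hx.2 hy₀L'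
      rw [hderivEq x hxL]
      have h1 := hbound x (Set.mem_Iic.mpr hxL.le)
      have h2 := hge x ⟨le_of_lt hx.1, le_of_lt hx.2⟩
      nlinarith
    have hdiff : DifferentiableOn ℝ b (interior (Set.Icc y₂ y₀)) := by
      intro x hx
      rw [interior_Icc] at hx
      exact ((hD x (lt_of_lt_of_le hx.2 hy₀L')).differentiableAt).differentiableWithinAt
    have hmvt := (convex_Icc y₂ y₀).image_sub_le_mul_sub_of_deriv_le
      (hbcont.mono (Set.Icc_subset_Icc hy₂mem.1 le_rfl)) hdiff hdle
      y₂ (Set.left_mem_Icc.mpr (le_of_lt hy₂lt)) y₀ (Set.right_mem_Icc.mpr (le_of_lt hy₂lt))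
      (le_of_lt hy₂lt)
    rw [← hMdef, hy₂v] at hmvt
    nlinarith
  -- Step B : reciprocal blows up
  set δ := (M ^ 2 - 2 * κ) / M ^ 2 with hδ
  have hδ0 : 0 < δ := div_pos (by linarith) (by positivity)
  set y₃ := y₀ - (1 / M + 1) / δ with hy₃def
  have hy₃lt : y₃ < y₀ := by
    have : 0 < (1 / M + 1) / δ := by positivity
    simp only [hy₃def]; linarith
  have hsub : Set.Icc y₃ y₀ ⊆ Set.Iic L := fun z hz => le_trans hz.2 hy₀L'
  have hbpos : ∀ z ∈ Set.Icc y₃ y₀, 0 < b z := fun z hz => lt_of_lt_of_le hM0 (hA z hz.2)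
  set g : ℝ → ℝ := fun z => (b z)⁻¹ with hg
  have hgcont : ContinuousOn g (Set.Icc y₃ y₀) :=
    (hbc.mono hsub).inv₀ (fun z hz => ne_of_gt (hbpos z hz))
  have hgderiv : ∀ x ∈ interior (Set.Icc y₃ y₀), HasDerivAt g (-b' x / b x ^ 2) x := by
    intro x hx
    rw [interior_Icc] at hx
    have hxL : x < L := lt_of_lt_of_le hx.2 hy₀L'
    exact (hD x hxL).inv (ne_of_gt (hbpos x ⟨le_of_lt hx.1, le_of_lt hx.2⟩))
  have hgdiff : DifferentiableOn ℝ g (interior (Set.Icc y₃ y₀)) :=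
    fun x hx => ((hgderiv x hx).differentiableAt).differentiableWithinAt
  have hdge : ∀ x ∈ interior (Set.Icc y₃ y₀), δ ≤ deriv g x := by
    intro x hx
    rw [(hgderiv x hx).deriv]
    rw [interior_Icc] at hx
    have hxL : x < L := lt_of_lt_of_le hx.2 hy₀L'
    have h1 := hbound x (Set.mem_Iic.mpr hxL.le)
    have h2 := hA x (le_of_lt hx.2)
    have hbx : 0 < b x := lt_of_lt_of_le hM0 h2
    rw [le_div_iff₀ (by positivity : (0:ℝ) < b x ^ 2), hδ, div_mul_eq_mul_div,
      div_le_iff₀ (by positivity : (0:ℝ) < M ^ 2)]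
    have ha : (b x ^ 2 - 2 * κ) * M ^ 2 ≤ (-b' x) * M ^ 2 :=
      mul_le_mul_of_nonneg_right (by linarith) (sq_nonneg M)
    have hb : κ * M ^ 2 ≤ κ * b x ^ 2 :=
      mul_le_mul_of_nonneg_left (by nlinarith) hκ.le
    nlinarith
  have hmvt := (convex_Icc y₃ y₀).mul_sub_le_image_sub_of_le_deriv hgcont hgdiff hdge
    y₃ (Set.left_mem_Icc.mpr (le_of_lt hy₃lt)) y₀ (Set.right_mem_Icc.mpr (le_of_lt hy₃lt))
    (le_of_lt hy₃lt)
  have hgy₀ : g y₀ = 1 / M := by simp [hg, ← hMdef, one_div]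
  have hgy₃ : 0 < g y₃ := by
    simp only [hg]
    exact inv_pos.mpr (hbpos y₃ (Set.left_mem_Icc.mpr (le_of_lt hy₃lt)))
  have hdist : y₀ - y₃ = (1 / M + 1) / δ := by simp [hy₃def]
  rw [hdist, hgy₀] at hmvt
  have hcancel : δ * ((1 / M + 1) / δ) = 1 / M + 1 := by
    field_simp
  rw [hcancel] at hmvt
  linarith
end

section
/- Let L ∈ ℝ, x < L and κ > 0, and let b : ℝ → ℝ be continuously differentiable on (−∞, L] with 0 ≤ (b(y)² + b'(y))/2 ≤ κ for all y ≤ L. Define β(y) := ∫₀^y b(u) du and, for an integer k ≥ 1, set x_i := x + i(L−x)/k for i = 0, 1, …, k. Then ∑_{i=1}^k exp( β(x_i) − β(x_{i−1}) ) ≤ k · exp( (L−x)√(2κ)/k ). In particular, for the choice k = ⌊(L−x)√(2κ)⌋ + 1, one has ∑_{i=1}^k exp( β(x_i) − β(x_{i−1}) ) ≤ (⌊(L−x)√(2κ)⌋ + 1) · e. -/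
open Real MeasureTheory intervalIntegral
open Set

lemma aux_b_le (L κ : ℝ) (hκ : 0 < κ) (b b' : ℝ → ℝ)
    (hderiv : ∀ y ∈ Set.Iic L, HasDerivWithinAt b (b' y) (Set.Iic L) y)
    (hbound : ∀ y ∈ Set.Iic L, 0 ≤ (b y ^ 2 + b' y) / 2 ∧ (b y ^ 2 + b' y) / 2 ≤ κ) :
    ∀ y ∈ Set.Iic L, b y ≤ Real.sqrt (2 * κ) := by
  set s : ℝ := Real.sqrt (2 * κ) with hsdef
  have hs : 0 < s := Real.sqrt_pos.2 (by linarith)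
  have hs2 : s ^ 2 = 2 * κ := Real.sq_sqrt (by linarith)
  have hcb : ContinuousOn b (Set.Iic L) := fun y hy => (hderiv y hy).continuousWithinAt
  -- B y = ∫ L..y b
  set B : ℝ → ℝ := fun y => ∫ u in L..y, b u with hBdef
  have hint : ∀ y ∈ Set.Iic L, IntervalIntegrable b volume L y := by
    intro y hy
    apply ContinuousOn.intervalIntegrable
    exact hcb.mono (by rw [Set.uIcc_of_ge hy]; exact Set.Icc_subset_Iic_self)
  have hBd : ∀ y ∈ Set.Iic L, HasDerivWithinAt B (b y) (Set.Iic L) y := by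
    intro y hy
    rcases eq_or_lt_of_le (show y ≤ L from hy) with h | h
    · subst h
      exact intervalIntegral.integral_hasDerivWithinAt_right (hint y hy)
        ⟨Set.Iic y, self_mem_nhdsWithin, hcb.aestronglyMeasurable measurableSet_Iic⟩
        (hcb y hy)
    · have hmem : Set.Iic L ∈ nhds y := Iic_mem_nhds h
      have : HasDerivAt B (b y) y :=
        intervalIntegral.integral_hasDerivAt_right (hint y hy)
          ⟨Set.Iic L, hmem, hcb.aestronglyMeasurable measurableSet_Iic⟩
          ((hcb y hy).continuousAt hmem)
      exact this.hasDerivWithinAt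
  -- g is antitone
  set g : ℝ → ℝ := fun y => (b y - s) * Real.exp (B y + s * y) with hgdef
  have hgd : ∀ y ∈ Set.Iic L,
      HasDerivWithinAt g ((b' y + b y ^ 2 - 2 * κ) * Real.exp (B y + s * y)) (Set.Iic L) y := by
    intro y hy
    have h1 : HasDerivWithinAt (fun y => b y - s) (b' y) (Set.Iic L) y :=
      (hderiv y hy).sub_const s
    have hlin : HasDerivWithinAt (fun y : ℝ => B y + s * y) (b y + s) (Set.Iic L) y :=
      (hBd y hy).add (by simpa using (hasDerivWithinAt_id y (Set.Iic L)).const_mul s)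
    have h2 := hlin.exp
    have := h1.mul h2
    refine this.congr_deriv ?_
    rw [← hs2]; ring
  have hganti : AntitoneOn g (Set.Iic L) := by
    apply antitoneOn_of_hasDerivWithinAt_nonpos (convex_Iic L)
      (fun y hy => (hgd y hy).continuousWithinAt)
      (f' := fun y => (b' y + b y ^ 2 - 2 * κ) * Real.exp (B y + s * y))
    · intro t ht
      rw [interior_Iic] at ht
      exact ((hgd t (Set.mem_Iic.mpr ht.le)).mono (by rw [interior_Iic]; exact Set.Iio_subset_Iic_self))
    · intro t ht
      rw [interior_Iic] at ht
      have := (hbound t (Set.mem_Iic.mpr ht.le)).2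
      exact mul_nonpos_of_nonpos_of_nonneg (by linarith) (Real.exp_pos _).le
  -- suppose b y0 > s
  intro y0 hy0
  by_contra hby
  push_neg at hby
  obtain ⟨c, hcdef⟩ : ∃ c, c = g y0 := ⟨_, rfl⟩
  have hc : 0 < c := hcdef ▸ mul_pos (by linarith) (Real.exp_pos _)
  set φ : ℝ → ℝ := fun y => Real.exp (B y) with hφdef
  have hφd : ∀ y ∈ Set.Iic L, HasDerivWithinAt φ (Real.exp (B y) * b y) (Set.Iic L) y :=
    fun y hy => (hBd y hy).exp
  have hcontB : ContinuousOn B (Set.Iic L) := fun y hy => (hBd y hy).continuousWithinAt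
  -- pointwise lower bound on φ' for u ≤ y0
  have key : ∀ u, u ≤ y0 → c * Real.exp (-(s * u)) ≤ Real.exp (B u) * b u := by
    intro u hu
    have hg : c ≤ g u := hcdef ▸ hganti (le_trans hu hy0) hy0 hu
    have h2 : c * Real.exp (-(s * u)) ≤ (b u - s) * Real.exp (B u + s * u) * Real.exp (-(s * u)) :=
      mul_le_mul_of_nonneg_right hg (Real.exp_pos _).le
    have h3 : Real.exp (B u + s * u) * Real.exp (-(s * u)) = Real.exp (B u) := by
      rw [← Real.exp_add]; ring_nf
    have h4 : (b u - s) * Real.exp (B u + s * u) * Real.exp (-(s * u))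
        = (b u - s) * Real.exp (B u) := by rw [mul_assoc, h3]
    rw [h4] at h2
    nlinarith [Real.exp_pos (B u), mul_nonneg hs.le (Real.exp_pos (B u)).le]
  -- FTC lower bound
  have main : ∀ y, y ≤ y0 → c / s * (Real.exp (-(s * y)) - Real.exp (-(s * y0))) ≤ φ y0 - φ y := by
    intro y hy
    have hsubL : Set.Icc y y0 ⊆ Set.Iic L := fun t ht => le_trans ht.2 hy0
    have hftc : ∫ u in y..y0, Real.exp (B u) * b u = φ y0 - φ y := by
      apply intervalIntegral.integral_eq_sub_of_hasDeriv_right_of_le hy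
        (fun t ht => ((hφd t (hsubL ht)).continuousWithinAt).mono hsubL)
      · intro t ht
        have htL : t < L := lt_of_lt_of_le ht.2 hy0
        exact (((hφd t htL.le).hasDerivAt (Iic_mem_nhds htL)).hasDerivWithinAt)
      · apply ContinuousOn.intervalIntegrable
        have : Set.uIcc y y0 ⊆ Set.Iic L := by rw [Set.uIcc_of_le hy]; exact hsubL
        exact ((hcontB.mono this).rexp.mul (hcb.mono this))
    have hftc2 : ∫ u in y..y0, c * Real.exp (-(s * u))
        = c / s * (Real.exp (-(s * y)) - Real.exp (-(s * y0))) := by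
      have hF : ∀ u : ℝ, HasDerivAt (fun u : ℝ => -(c / s) * Real.exp (-(s * u)))
          (c * Real.exp (-(s * u))) u := by
        intro u
        have h1 : HasDerivAt (fun u : ℝ => -(s * u)) (-s) u := by
          simpa using (hasDerivAt_id u).const_mul (-s)
        have := (h1.exp).const_mul (-(c / s))
        refine this.congr_deriv ?_
        rw [show -(c / s) * (Real.exp (-(s * u)) * -s) = c / s * s * Real.exp (-(s * u)) by ring,
          div_mul_cancel₀ c hs.ne']
      rw [intervalIntegral.integral_eq_sub_of_hasDerivAt (fun u _ => hF u)
        (by apply Continuous.intervalIntegrable; continuity)]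
      ring
    have hmono : ∫ u in y..y0, c * Real.exp (-(s * u)) ≤ ∫ u in y..y0, Real.exp (B u) * b u := by
      apply intervalIntegral.integral_mono_on hy
      · exact (Continuous.intervalIntegrable (by continuity) _ _)
      · apply ContinuousOn.intervalIntegrable
        have : Set.uIcc y y0 ⊆ Set.Iic L := by rw [Set.uIcc_of_le hy]; exact hsubL
        exact ((hcontB.mono this).rexp.mul (hcb.mono this))
      · exact fun u hu => key u hu.2
    rw [← hftc, ← hftc2]
    exact hmono
  -- choose y small enough to contradict
  set T : ℝ := s * (φ y0 + 1) / c + Real.exp (-(s * y0)) with hTdef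
  have hT : 0 < T := by positivity
  set y : ℝ := min y0 (-Real.log T / s) with hydef
  have hyy0 : y ≤ y0 := min_le_left _ _
  have hexpy : T ≤ Real.exp (-(s * y)) := by
    have h1 : y ≤ -Real.log T / s := min_le_right _ _
    have h2 : Real.log T ≤ -(s * y) := by
      have h3 := (le_div_iff₀ hs).1 h1
      linarith
    calc T = Real.exp (Real.log T) := (Real.exp_log hT).symm
    _ ≤ Real.exp (-(s * y)) := Real.exp_le_exp.2 h2
  have hlow : φ y0 + 1 ≤ c / s * (Real.exp (-(s * y)) - Real.exp (-(s * y0))) := by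
    have hc0 : c ≠ 0 := ne_of_gt hc
    have hs0 : s ≠ 0 := ne_of_gt hs
    have : φ y0 + 1 = c / s * (T - Real.exp (-(s * y0))) := by
      rw [hTdef]
      field_simp
      ring
    rw [this]
    apply mul_le_mul_of_nonneg_left (by linarith) (by positivity)
  have := main y hyy0
  have hφy : 0 < φ y := Real.exp_pos _
  linarith

/-- Space splitting: with `0 ≤ (b² + b')/2 ≤ κ` on `(−∞, L]`, `β(y) = ∫₀^y b` and
`x_i = x + i(L−x)/k`, one has `∑_{i=1}^k exp(β(x_i) − β(x_{i−1})) ≤ k exp((L−x)√(2κ)/k)`;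
for `k = ⌊(L−x)√(2κ)⌋ + 1` the bound is `(⌊(L−x)√(2κ)⌋ + 1)·e`. -/
theorem stmt_9 (L x κ : ℝ) (hx : x < L) (hκ : 0 < κ) (b b' : ℝ → ℝ)
    (hderiv : ∀ y ∈ Set.Iic L, HasDerivWithinAt b (b' y) (Set.Iic L) y)
    (hcont : ContinuousOn b' (Set.Iic L))
    (hbound : ∀ y ∈ Set.Iic L, 0 ≤ (b y ^ 2 + b' y) / 2 ∧ (b y ^ 2 + b' y) / 2 ≤ κ)
    (β : ℝ → ℝ) (hβ : ∀ y, β y = ∫ u in (0 : ℝ)..y, b u)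
    (k : ℕ) (hk : 1 ≤ k) :
    (∑ i ∈ Finset.Icc 1 k,
        Real.exp (β (x + i * (L - x) / k) - β (x + ((i : ℝ) - 1) * (L - x) / k)))
      ≤ k * Real.exp ((L - x) * Real.sqrt (2 * κ) / k) ∧
    (k = ⌊(L - x) * Real.sqrt (2 * κ)⌋₊ + 1 →
      (∑ i ∈ Finset.Icc 1 k,
          Real.exp (β (x + i * (L - x) / k) - β (x + ((i : ℝ) - 1) * (L - x) / k)))
        ≤ (⌊(L - x) * Real.sqrt (2 * κ)⌋₊ + 1) * Real.exp 1) := by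
  have hs : 0 < Real.sqrt (2 * κ) := Real.sqrt_pos.2 (by linarith)
  set s : ℝ := Real.sqrt (2 * κ) with hsdef
  have hbs := aux_b_le L κ hκ b b' hderiv hbound
  have hcb : ContinuousOn b (Set.Iic L) := fun y hy => (hderiv y hy).continuousWithinAt
  have hk0 : (0 : ℝ) < (k : ℝ) := by exact_mod_cast hk
  have hintcd : ∀ c d : ℝ, c ≤ d → d ≤ L → IntervalIntegrable b volume c d := by
    intro c d hcd hdL
    apply ContinuousOn.intervalIntegrable
    exact hcb.mono (by rw [Set.uIcc_of_le hcd]; exact fun t ht => le_trans ht.2 hdL)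
  have key : ∀ c d : ℝ, c ≤ d → d ≤ L → β d - β c ≤ s * (d - c) := by
    intro c d hcd hdL
    by_cases hI : IntervalIntegrable b volume 0 c
    · have hadd : (∫ u in (0:ℝ)..c, b u) + ∫ u in c..d, b u = ∫ u in (0:ℝ)..d, b u :=
        intervalIntegral.integral_add_adjacent_intervals hI (hintcd c d hcd hdL)
      have h1 : β d - β c = ∫ u in c..d, b u := by rw [hβ d, hβ c]; linarith
      rw [h1]
      calc (∫ u in c..d, b u) ≤ ∫ _u in c..d, s := by
            apply intervalIntegral.integral_mono_on hcd (hintcd c d hcd hdL)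
              intervalIntegrable_const
            intro u hu; exact hbs u (le_trans hu.2 hdL)
        _ = s * (d - c) := by
            rw [intervalIntegral.integral_const, smul_eq_mul]; ring
    · have hId : ¬ IntervalIntegrable b volume 0 d := by
        intro h; exact hI (h.trans ((hintcd c d hcd hdL).symm))
      rw [hβ d, hβ c, intervalIntegral.integral_undef hId, intervalIntegral.integral_undef hI]
      have : 0 ≤ s * (d - c) := mul_nonneg hs.le (by linarith)
      linarith
  have hsum : ∀ i ∈ Finset.Icc 1 k,
      Real.exp (β (x + i * (L - x) / k) - β (x + ((i : ℝ) - 1) * (L - x) / k))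
        ≤ Real.exp ((L - x) * s / k) := by
    intro i hi
    obtain ⟨hi1, hik⟩ := Finset.mem_Icc.1 hi
    have hi1' : (1 : ℝ) ≤ (i : ℝ) := by exact_mod_cast hi1
    have hik' : (i : ℝ) ≤ (k : ℝ) := by exact_mod_cast hik
    have hLx : (0:ℝ) ≤ L - x := by linarith
    have hcd : x + ((i : ℝ) - 1) * (L - x) / k ≤ x + i * (L - x) / k := by
      have h1 : ((i:ℝ) - 1) * (L - x) ≤ (i:ℝ) * (L - x) :=
        mul_le_mul_of_nonneg_right (by linarith) hLx
      have h2 : ((i:ℝ) - 1) * (L - x) / k ≤ (i:ℝ) * (L - x) / k :=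
        div_le_div_of_nonneg_right h1 hk0.le
      linarith
    have hdL : x + i * (L - x) / k ≤ L := by
      have h1 : (i:ℝ) * (L - x) ≤ (k:ℝ) * (L - x) :=
        mul_le_mul_of_nonneg_right hik' hLx
      have h2 : (i:ℝ) * (L - x) / k ≤ (k:ℝ) * (L - x) / k :=
        div_le_div_of_nonneg_right h1 hk0.le
      have h3 : (k:ℝ) * (L - x) / k = L - x := mul_div_cancel_left₀ _ hk0.ne'
      linarith
    have hb := key _ _ hcd hdL
    apply Real.exp_le_exp.2
    have heq : s * ((x + i * (L - x) / k) - (x + ((i : ℝ) - 1) * (L - x) / k))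
        = (L - x) * s / k := by field_simp; ring
    linarith [hb, heq.ge, heq.le]
  have hcard : (Finset.Icc 1 k).card = k := by rw [Nat.card_Icc]; omega
  constructor
  · calc (∑ i ∈ Finset.Icc 1 k,
        Real.exp (β (x + i * (L - x) / k) - β (x + ((i : ℝ) - 1) * (L - x) / k)))
        ≤ ∑ _i ∈ Finset.Icc 1 k, Real.exp ((L - x) * s / k) := Finset.sum_le_sum hsum
      _ = k * Real.exp ((L - x) * s / k) := by
          rw [Finset.sum_const, hcard, nsmul_eq_mul]
  · intro hkk
    have hlt : (L - x) * s < (k : ℝ) := by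
      rw [hkk]
      push_cast
      exact Nat.lt_floor_add_one _
    have hdiv : (L - x) * s / k ≤ 1 := by
      rw [div_le_one hk0]; linarith
    have hkcast : (k : ℝ) = (⌊(L - x) * s⌋₊ : ℝ) + 1 := by rw [hkk]; push_cast; ring
    calc (∑ i ∈ Finset.Icc 1 k,
        Real.exp (β (x + i * (L - x) / k) - β (x + ((i : ℝ) - 1) * (L - x) / k)))
        ≤ ∑ _i ∈ Finset.Icc 1 k, Real.exp ((L - x) * s / k) := Finset.sum_le_sum hsum
      _ = k * Real.exp ((L - x) * s / k) := by
          rw [Finset.sum_const, hcard, nsmul_eq_mul]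
      _ ≤ (k:ℝ) * Real.exp 1 :=
          mul_le_mul_of_nonneg_left (Real.exp_le_exp.2 hdiv) hk0.le
      _ = ((⌊(L - x) * s⌋₊ : ℝ) + 1) * Real.exp 1 := by rw [hkcast]
end

section
/- Let (Ω, 𝓕, P) be a probability space carrying an i.i.d. sequence of pairs (N_n, C_n)_{n≥1}, where each N_n is a nonnegative integrable real random variable and each C_n takes values in {0,1}. Let p := P(C₁ = 1) and assume p > 0. Define I := inf{n ≥ 1 : C_n = 1}. Then the random variable ∑_{n=1}^{I} N_n is integrable and E[ ∑_{n=1}^{I} N_n ] ≤ (2/p) · E[N₁]. -/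
open MeasureTheory ProbabilityTheory

/-- For an i.i.d. sequence of pairs `(N_n, C_n)` with `N_n ≥ 0` integrable and
`p = P(C₁ = 1) > 0`, the random sum `∑_{n=1}^I N_n` up to the first acceptance
`I = inf{n ≥ 1 : C_n = 1}` is integrable with expectation at most `(2/p) E[N₁]`. -/
theorem stmt_10 {Ω : Type*} [MeasurableSpace Ω] (P : Measure Ω) [IsProbabilityMeasure P]
    (N : ℕ → Ω → ℝ) (C : ℕ → Ω → Bool)
    (hmeas : ∀ n, Measurable (fun ω => (N n ω, C n ω)))
    (hiid : iIndepFun (fun n ω => (N n ω, C n ω)) P)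
    (hident : ∀ n, 1 ≤ n →
      P.map (fun ω => (N n ω, C n ω)) = P.map (fun ω => (N 1 ω, C 1 ω)))
    (hN0 : ∀ n ω, 0 ≤ N n ω) (hint : ∀ n, Integrable (N n) P)
    (p : ℝ) (hp : p = (P {ω | C 1 ω = true}).toReal) (hppos : 0 < p)
    (I : Ω → ℕ) (hI : ∀ ω, I ω = sInf {n | 1 ≤ n ∧ C n ω = true}) :
    Integrable (fun ω => ∑ i ∈ Finset.Icc 1 (I ω), N i ω) P ∧
    ∫ ω, (∑ i ∈ Finset.Icc 1 (I ω), N i ω) ∂P ≤ (2 / p) * ∫ ω, N 1 ω ∂P := by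
  classical
  set X : ℕ → Ω → ℝ × Bool := fun n ω => (N n ω, C n ω) with hX
  have hNmeas : ∀ n, Measurable (N n) := fun n => (measurable_fst.comp (hmeas n))
  have hCmeas : ∀ n, Measurable (C n) := fun n => (measurable_snd.comp (hmeas n))
  -- basic facts about I
  have hIlt : ∀ ω k, 1 ≤ k → k < I ω → C k ω = false := by
    intro ω k hk1 hk
    rw [hI ω] at hk
    have := Nat.notMem_of_lt_sInf hk
    simp only [Set.mem_setOf_eq, not_and] at this
    exact Bool.eq_false_iff.mpr fun h => this hk1 h
  -- measurability of I
  have hImeas : Measurable I := by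
    apply measurable_to_countable'
    intro m
    match m with
    | 0 =>
      have : I ⁻¹' {0} = ⋂ n, {ω | ¬ (1 ≤ n ∧ C n ω = true)} := by
        ext ω
        simp only [Set.mem_preimage, Set.mem_singleton_iff, hI ω, Set.mem_iInter,
          Set.mem_setOf_eq, Nat.sInf_eq_zero]
        constructor
        · rintro (⟨h, _⟩ | h)
          · omega
          · intro n hn
            exact (Set.eq_empty_iff_forall_notMem.mp h) n hn
        · intro h
          right
          exact Set.eq_empty_iff_forall_notMem.mpr fun n hn => h n hn
      rw [this]
      refine MeasurableSet.iInter fun n => ?_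
      by_cases hn : 1 ≤ n
      · simp only [hn, true_and]
        exact (hCmeas n (measurableSet_singleton true)).compl
      · simp [hn]
    | (m + 1) =>
      have : I ⁻¹' {m + 1} =
          {ω | C (m + 1) ω = true} ∩ ⋂ k, {ω | ¬ (k < m + 1 ∧ 1 ≤ k ∧ C k ω = true)} := by
        ext ω
        simp only [Set.mem_preimage, Set.mem_singleton_iff, Set.mem_inter_iff,
          Set.mem_iInter, Set.mem_setOf_eq]
        constructor
        · intro h
          have hne : {n | 1 ≤ n ∧ C n ω = true}.Nonempty := by
            by_contra hc
            rw [Set.not_nonempty_iff_eq_empty] at hc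
            rw [hI ω, hc] at h
            simp at h
          have hmem := Nat.sInf_mem hne
          rw [← hI ω, h] at hmem
          refine ⟨hmem.2, fun k hk => ?_⟩
          rcases hk with ⟨hk1, hk2⟩
          have := Nat.notMem_of_lt_sInf (s := {n | 1 ≤ n ∧ C n ω = true})
            (by rw [← hI ω, h]; exact hk1)
          exact this hk2
        · rintro ⟨h1, h2⟩
          have hmem : m + 1 ∈ {n | 1 ≤ n ∧ C n ω = true} := ⟨by omega, h1⟩
          have hle : sInf {n | 1 ≤ n ∧ C n ω = true} ≤ m + 1 := Nat.sInf_le hmem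
          rw [hI ω]
          rcases lt_or_eq_of_le hle with hlt | heq
          · exfalso
            have hmem' := Nat.sInf_mem ⟨m + 1, hmem⟩
            exact h2 _ ⟨hlt, hmem'⟩
          · exact heq
      rw [this]
      refine MeasurableSet.inter (hCmeas _ (measurableSet_singleton true)) ?_
      refine MeasurableSet.iInter fun k => ?_
      by_cases hk : k < m + 1 ∧ 1 ≤ k
      · simp only [hk.1, hk.2, true_and]
        exact (hCmeas k (measurableSet_singleton true)).compl
      · rw [not_and] at hk
        by_cases hk1 : k < m + 1
        · simp [hk1, hk hk1]
        · simp [hk1]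
  -- measurability of the random sum F
  set F : Ω → ℝ := fun ω => ∑ i ∈ Finset.Icc 1 (I ω), N i ω with hF
  have hFmeas : Measurable F := by
    have h1 : Measurable (fun q : Ω × ℕ => ∑ i ∈ Finset.Icc 1 q.2, N i q.1) := by
      apply measurable_from_prod_countable_left
      intro m
      exact Finset.measurable_sum (Finset.Icc 1 m) fun i _ => (hNmeas i)
    exact h1.comp (measurable_id.prodMk hImeas)
  have hF0 : ∀ ω, 0 ≤ F ω := fun ω => Finset.sum_nonneg fun i _ => hN0 i ω
  -- the events A m
  set A : ℕ → Set Ω := fun m => {ω | ∀ k, 1 ≤ k → k < m → C k ω = false} with hA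
  have hAmeas : ∀ m, MeasurableSet (A m) := by
    intro m
    have : A m = ⋂ k, {ω | ¬ (1 ≤ k ∧ k < m) ∨ C k ω = false} := by
      ext ω; simp only [hA, Set.mem_setOf_eq, Set.mem_iInter]
      constructor
      · intro h k
        by_cases hk : 1 ≤ k ∧ k < m
        · exact Or.inr (h k hk.1 hk.2)
        · exact Or.inl hk
      · intro h k hk1 hk2
        rcases h k with h' | h'
        · exact absurd ⟨hk1, hk2⟩ h'
        · exact h'
    rw [this]
    refine MeasurableSet.iInter fun k => ?_
    by_cases hk : 1 ≤ k ∧ k < m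
    · have : {ω | ¬ (1 ≤ k ∧ k < m) ∨ C k ω = false} = C k ⁻¹' {false} := by
        ext ω; simp [hk.1, hk.2]
      rw [this]; exact hCmeas k (measurableSet_singleton false)
    · have : {ω | ¬ (1 ≤ k ∧ k < m) ∨ C k ω = false} = Set.univ := by
        ext ω; simp [hk]
      rw [this]; exact MeasurableSet.univ
  -- characterization of A (n+1) via Finset.Icc
  have hAiff : ∀ n ω, ω ∈ A (n + 1) ↔ ∀ k ∈ Finset.Icc 1 n, C k ω = false := by
    intro n ω
    simp only [hA, Set.mem_setOf_eq, Finset.mem_Icc]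
    constructor
    · rintro h k ⟨h1, h2⟩
      exact h k h1 (by omega)
    · intro h k h1 h2
      exact h k ⟨h1, by omega⟩
  -- the probabilities
  set pE : ENNReal := P {ω | C 1 ω = true} with hpE
  have hpE1 : pE ≤ 1 := prob_le_one
  have hpE0 : pE ≠ 0 := by
    intro h
    have : p = 0 := by rw [hp, h, ENNReal.toReal_zero]
    linarith
  set q : ENNReal := P {ω | C 1 ω = false} with hqdef
  have hq_eq : q = 1 - pE := by
    have hcompl : {ω | C 1 ω = false} = {ω | C 1 ω = true}ᶜ := by
      ext ω
      simp only [Set.mem_setOf_eq, Set.mem_compl_iff, Bool.not_eq_true]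
    rw [hqdef, hcompl,
      measure_compl (show MeasurableSet {ω | C 1 ω = true} from
        hCmeas 1 (measurableSet_singleton true)) (measure_ne_top _ _),
      measure_univ]
  -- identical distributions
  have hCk : ∀ k, 1 ≤ k → P {ω | C k ω = false} = q := by
    intro k hk
    have hpre : ∀ j, {ω | C j ω = false} = X j ⁻¹' (Set.univ ×ˢ {false}) := by
      intro j; ext ω; simp [hX]
    have hBmeas : MeasurableSet ((Set.univ : Set ℝ) ×ˢ ({false} : Set Bool)) :=
      MeasurableSet.univ.prod (measurableSet_singleton false)
    rw [hqdef, hpre k, hpre 1, ← Measure.map_apply (hmeas k) hBmeas,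
      ← Measure.map_apply (hmeas 1) hBmeas, hident k hk]
  have hNk : ∀ k, 1 ≤ k →
      ∫⁻ ω, ENNReal.ofReal (N k ω) ∂P = ∫⁻ ω, ENNReal.ofReal (N 1 ω) ∂P := by
    intro k hk
    have hφ : Measurable (fun x : ℝ × Bool => ENNReal.ofReal x.1) :=
      ENNReal.measurable_ofReal.comp measurable_fst
    have h1 : ∫⁻ ω, ENNReal.ofReal (N k ω) ∂P
        = ∫⁻ x, ENNReal.ofReal x.1 ∂(P.map (X k)) := (lintegral_map hφ (hmeas k)).symm
    have h2 : ∫⁻ ω, ENNReal.ofReal (N 1 ω) ∂P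
        = ∫⁻ x, ENNReal.ofReal x.1 ∂(P.map (X 1)) := (lintegral_map hφ (hmeas 1)).symm
    rw [h1, h2, hident k hk]
  -- measure of A (n+1)
  have hPA : ∀ n, P (A (n + 1)) = q ^ n := by
    intro n
    have hAeq : A (n + 1) = ⋂ k ∈ Finset.Icc 1 n, {ω | C k ω = false} := by
      ext ω
      simp only [Set.mem_iInter, Set.mem_setOf_eq]
      exact hAiff n ω
    rw [hAeq, hiid.meas_biInter (fun k _ => ⟨Set.univ ×ˢ ({false} : Set Bool),
      MeasurableSet.univ.prod (measurableSet_singleton false), by ext ω; simp [hX, Set.mem_prod]⟩)]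
    rw [Finset.prod_congr rfl fun k hk => hCk k (Finset.mem_Icc.mp hk).1,
      Finset.prod_const, Nat.card_Icc]
    simp
  -- the dominating functions
  set g : ℕ → Ω → ENNReal :=
    fun n => (A (n + 1)).indicator (fun ω => ENNReal.ofReal (N (n + 1) ω)) with hg
  have hgmeas : ∀ n, Measurable (g n) := fun n =>
    ((ENNReal.measurable_ofReal.comp (hNmeas (n + 1))).indicator (hAmeas (n + 1)))
  -- pointwise bound
  have hpt : ∀ ω, ENNReal.ofReal (F ω) ≤ ∑' n, g n ω := by
    intro ω
    have h0 : ENNReal.ofReal (F ω) = ∑ i ∈ Finset.Icc 1 (I ω), ENNReal.ofReal (N i ω) :=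
      ENNReal.ofReal_sum_of_nonneg fun i _ => hN0 i ω
    rw [h0, ← Finset.Ico_add_one_right_eq_Icc, Finset.sum_Ico_eq_sum_range, Nat.add_sub_cancel]
    have h1 : ∀ j ∈ Finset.range (I ω), ENNReal.ofReal (N (1 + j) ω) = g j ω := by
      intro j hj
      rw [Finset.mem_range] at hj
      have hωA : ω ∈ A (j + 1) := by
        intro k hk1 hk2
        exact hIlt ω k hk1 (by omega)
      rw [hg]
      simp only [Set.indicator_of_mem hωA]
      rw [add_comm]
    rw [Finset.sum_congr rfl h1]
    exact ENNReal.sum_le_tsum _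
  -- independence
  have hindep : ∀ n, IndepFun (fun ω => ENNReal.ofReal (N (n + 1) ω))
      ((A (n + 1)).indicator (1 : Ω → ENNReal)) P := by
    intro n
    set S : Finset ℕ := {n + 1} with hS
    set T : Finset ℕ := Finset.Icc 1 n with hT
    have hST : Disjoint S T := by
      simp only [hS, hT, Finset.disjoint_singleton_left, Finset.mem_Icc]
      omega
    have hbase := hiid.indepFun_finset S T hST hmeas
    set φ : ((i : S) → ℝ × Bool) → ENNReal :=
      fun v => ENNReal.ofReal (v ⟨n + 1, Finset.mem_singleton_self _⟩).1 with hφdef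
    set ψ : ((i : T) → ℝ × Bool) → ENNReal :=
      fun v => if ∀ i : T, (v i).2 = false then 1 else 0 with hψdef
    have hφm : Measurable φ :=
      ENNReal.measurable_ofReal.comp (measurable_fst.comp (measurable_pi_apply _))
    have hψm : Measurable ψ := by
      have hset : MeasurableSet {v : (i : T) → ℝ × Bool | ∀ i : T, (v i).2 = false} := by
        have : {v : (i : T) → ℝ × Bool | ∀ i : T, (v i).2 = false}
            = ⋂ i : T, (fun v : (i : T) → ℝ × Bool => (v i).2) ⁻¹' {false} := by
          ext v; simp
        rw [this]
        exact MeasurableSet.iInter fun i =>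
          (measurable_snd.comp (measurable_pi_apply i)) (measurableSet_singleton false)
      have : ψ = Set.indicator {v : (i : T) → ℝ × Bool | ∀ i : T, (v i).2 = false}
          (fun _ => (1 : ENNReal)) := by
        ext v
        by_cases hv : ∀ i : T, (v i).2 = false <;> simp [hψdef, hv, Set.indicator]
      rw [this]
      exact measurable_const.indicator hset
    have h := hbase.comp hφm hψm
    have e1 : (φ ∘ fun a (i : S) => X i a) = fun ω => ENNReal.ofReal (N (n + 1) ω) := rfl
    have e2 : (ψ ∘ fun a (i : T) => X i a) = (A (n + 1)).indicator (1 : Ω → ENNReal) := by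
      funext ω
      simp only [Function.comp_apply]
      by_cases hω : ω ∈ A (n + 1)
      · rw [hψdef]
        simp only [Set.indicator_of_mem hω, Pi.one_apply]
        rw [if_pos]
        intro i
        exact (hAiff n ω).mp hω i i.2
      · rw [hψdef]
        simp only [Set.indicator_of_notMem hω]
        rw [if_neg]
        intro hc
        exact hω ((hAiff n ω).mpr fun k hk => hc ⟨k, hk⟩)
    rw [e1, e2] at h
    exact h
  -- lintegral of g n
  have hgint : ∀ n, ∫⁻ ω, g n ω ∂P = (∫⁻ ω, ENNReal.ofReal (N 1 ω) ∂P) * q ^ n := by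
    intro n
    have h1 : ∀ ω, g n ω
        = ENNReal.ofReal (N (n + 1) ω) * (A (n + 1)).indicator (1 : Ω → ENNReal) ω := by
      intro ω
      by_cases hω : ω ∈ A (n + 1) <;> simp [hg, Set.indicator, hω]
    rw [lintegral_congr h1,
      lintegral_mul_eq_lintegral_mul_lintegral_of_indepFun''
        (f := fun ω => ENNReal.ofReal (N (n + 1) ω))
        (g := (A (n + 1)).indicator (1 : Ω → ENNReal))
        ((hNmeas (n + 1)).ennreal_ofReal.aemeasurable)
        ((measurable_const.indicator (hAmeas (n + 1))).aemeasurable) (hindep n),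
      lintegral_indicator_one (hAmeas (n + 1)), hPA n, hNk (n + 1) (by omega)]
  -- main lintegral bound
  set E1 : ENNReal := ∫⁻ ω, ENNReal.ofReal (N 1 ω) ∂P with hE1
  have hE1top : E1 < ⊤ := Integrable.lintegral_lt_top (hint 1)
  have hkey : ∫⁻ ω, ENNReal.ofReal (F ω) ∂P ≤ E1 / pE := by
    calc ∫⁻ ω, ENNReal.ofReal (F ω) ∂P ≤ ∫⁻ ω, ∑' n, g n ω ∂P := lintegral_mono hpt
      _ = ∑' n, ∫⁻ ω, g n ω ∂P := lintegral_tsum fun n => (hgmeas n).aemeasurable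
      _ = ∑' n, E1 * q ^ n := by exact tsum_congr hgint
      _ = E1 * ∑' n, q ^ n := ENNReal.tsum_mul_left
      _ = E1 * (1 - q)⁻¹ := by rw [ENNReal.tsum_geometric]
      _ = E1 / pE := by
          rw [hq_eq, ENNReal.sub_sub_cancel (by norm_num) hpE1, ENNReal.div_eq_inv_mul, mul_comm]
  have hfin : ∫⁻ ω, ENNReal.ofReal (F ω) ∂P < ⊤ := by
    refine lt_of_le_of_lt hkey ?_
    rw [ENNReal.div_eq_inv_mul]
    exact ENNReal.mul_lt_top (ENNReal.inv_lt_top.mpr (pos_iff_ne_zero.mpr hpE0)) hE1top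
  -- integrability
  have hIntF : Integrable F P := by
    refine ⟨hFmeas.aestronglyMeasurable, ?_⟩
    rw [hasFiniteIntegral_iff_ofReal (Filter.Eventually.of_forall hF0)]
    exact hfin
  refine ⟨hIntF, ?_⟩
  -- the expectation bound
  have hIF : ∫ ω, F ω ∂P = (∫⁻ ω, ENNReal.ofReal (F ω) ∂P).toReal :=
    integral_eq_lintegral_of_nonneg_ae (Filter.Eventually.of_forall hF0)
      hFmeas.aestronglyMeasurable
  have hIN : ∫ ω, N 1 ω ∂P = E1.toReal :=
    integral_eq_lintegral_of_nonneg_ae (Filter.Eventually.of_forall (hN0 1))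
      (hNmeas 1).aestronglyMeasurable
  have hN1nonneg : 0 ≤ ∫ ω, N 1 ω ∂P := integral_nonneg (hN0 1)
  have hne : E1 / pE ≠ ⊤ := by
    rw [ENNReal.div_eq_inv_mul]
    exact (ENNReal.mul_lt_top (ENNReal.inv_lt_top.mpr (pos_iff_ne_zero.mpr hpE0)) hE1top).ne
  calc ∫ ω, F ω ∂P = (∫⁻ ω, ENNReal.ofReal (F ω) ∂P).toReal := hIF
    _ ≤ (E1 / pE).toReal := ENNReal.toReal_mono hne hkey
    _ = E1.toReal / pE.toReal := ENNReal.toReal_div E1 pE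
    _ = (1 / p) * ∫ ω, N 1 ω ∂P := by rw [hIN, hp]; ring
    _ ≤ (2 / p) * ∫ ω, N 1 ω ∂P := by
        apply mul_le_mul_of_nonneg_right _ hN1nonneg
        gcongr
        norm_num
end
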